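/- If η is a Gibbs process with Papangelou intensity κ and B is a measurable set with η(B) < ∞ almost surely, then almost surely Z_B(η_{B^c}) < ∞ and P(η(B)=0 | η_{B^c}) = 1 / Z_B(η_{B^c}). -/

import Mathlib

open MeasureTheory ENNReal

attribute [local instance] Classical.propDecidable

namespace Gibbs

variable {X : Type*} [MeasurableSpace X]

noncomputable def diracSum (l : List X) : Measure X :=
  (l.map fun x => Measure.dirac x).sum

noncomputable def diracSumFin {m : ℕ} (v : Fin m → X) : Measure X :=
  ∑ i, Measure.dirac (v i)

noncomputable def kappaList (κ : X → Measure X → ℝ≥0∞) : List X → Measure X → ℝ≥0∞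
  | [], _ => 1
  | x :: l, μ => κ x (μ + diracSum l) * kappaList κ l μ

noncomputable def kappaFin (κ : X → Measure X → ℝ≥0∞) {m : ℕ}
    (v : Fin m → X) (μ : Measure X) : ℝ≥0∞ :=
  kappaList κ (List.ofFn v) μ

def Cocycle (κ : X → Measure X → ℝ≥0∞) : Prop :=
  ∀ (x y : X) (μ : Measure X),
    κ x μ * κ y (μ + Measure.dirac x) = κ y μ * κ x (μ + Measure.dirac y)

def IsLocalization (Bseq : ℕ → Set X) : Prop :=
  Monotone Bseq ∧ (∀ j, MeasurableSet (Bseq j)) ∧ (⋃ j, Bseq j) = Set.univ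

def IsCounting (Bseq : ℕ → Set X) (μ : Measure X) : Prop :=
  ∀ j, ∃ n : ℕ, μ (Bseq j) = n

structure IsFactorial (fact : Measure X → (m : ℕ) → Measure (Fin m → X)) : Prop where
  one : ∀ μ : Measure X, fact μ 1 = Measure.map (fun x => (fun _ : Fin 1 => x)) μ
  symm : ∀ (μ : Measure X) (m : ℕ) (σ : Equiv.Perm (Fin m)),
    Measure.map (fun v => v ∘ σ) (fact μ m) = fact μ m
  recur : ∀ (μ : Measure X) (m : ℕ) (A : Set (Fin (m + 1) → X)), MeasurableSet A →
    fact μ (m + 1) A =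
      ∫⁻ v, (μ {x | Fin.snoc v x ∈ A}
        - ∑ j : Fin m, Set.indicator A (fun _ => (1 : ℝ≥0∞)) (Fin.snoc v (v j))) ∂ fact μ m

noncomputable def enat (c : ℝ≥0∞) : ℕ := ⌊c.toReal⌋₊

noncomputable def elog (c : ℝ≥0∞) : EReal :=
  if c = 0 then ⊥ else if c = ⊤ then ⊤ else ((Real.log c.toReal : ℝ) : EReal)

noncomputable def eexp (x : EReal) : ℝ≥0∞ :=
  if x = ⊥ then 0 else if x = ⊤ then ⊤ else ENNReal.ofReal (Real.exp x.toReal)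

noncomputable def hamiltonian (κ : X → Measure X → ℝ≥0∞)
    (fact : Measure X → (m : ℕ) → Measure (Fin m → X)) (μ ψ : Measure X) : EReal :=
  if μ Set.univ = 0 then 0
  else if μ Set.univ = ⊤ then ⊤
  else - elog ((((enat (μ Set.univ)).factorial : ℝ≥0∞))⁻¹ *
    ∫⁻ v : Fin (enat (μ Set.univ)) → X, kappaFin κ v ψ ∂ fact μ (enat (μ Set.univ)))

noncomputable def partitionZ (κ : X → Measure X → ℝ≥0∞) (lam : Measure X)
    (B : Set X) (ψ : Measure X) : ℝ≥0∞ :=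
  1 + ∑' m : ℕ, (((m + 1).factorial : ℝ≥0∞))⁻¹ *
    ∫⁻ v : Fin (m + 1) → X, kappaFin κ v ψ ∂(Measure.pi fun _ : Fin (m + 1) => lam.restrict B)

noncomputable def kernelRestrict (κ : X → Measure X → ℝ≥0∞) (C : Set X) (ψ : Measure X) :
    X → Measure X → ℝ≥0∞ :=
  fun x μ => κ x (ψ + μ) * Set.indicator C (fun _ => (1 : ℝ≥0∞)) x

lemma diracSum_nil : diracSum ([] : List X) = 0 := by simp [diracSum]

lemma diracSum_cons (x : X) (l : List X) :
    diracSum (x :: l) = Measure.dirac x + diracSum l := by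
  simp [diracSum]

lemma diracSum_concat (l : List X) (x : X) :
    diracSum (l ++ [x]) = diracSum l + Measure.dirac x := by
  induction l with
  | nil => simp [diracSum]
  | cons y l ih =>
      rw [List.cons_append, diracSum_cons, ih, diracSum_cons, add_assoc]

lemma kappaList_nil (κ : X → Measure X → ℝ≥0∞) (μ : Measure X) :
    kappaList κ [] μ = 1 := rfl

lemma kappaList_cons (κ : X → Measure X → ℝ≥0∞) (x : X) (l : List X) (μ : Measure X) :
    kappaList κ (x :: l) μ = κ x (μ + diracSum l) * kappaList κ l μ := rfl

lemma kappaList_concat (κ : X → Measure X → ℝ≥0∞) (l : List X) (x : X) (μ : Measure X) :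
    kappaList κ (l ++ [x]) μ = kappaList κ l (μ + Measure.dirac x) * κ x μ := by
  induction l generalizing μ with
  | nil => simp [kappaList_nil, kappaList_cons, diracSum_nil]
  | cons y l ih =>
      rw [List.cons_append, kappaList_cons, diracSum_concat, ih, kappaList_cons]
      have hμ : μ + (diracSum l + Measure.dirac x) = μ + Measure.dirac x + diracSum l := by
        rw [add_comm (diracSum l), ← add_assoc]
      rw [hμ]; ring

lemma kappaFin_snoc (κ : X → Measure X → ℝ≥0∞) {m : ℕ} (v : Fin m → X) (x : X)
    (μ : Measure X) :
    kappaFin κ (Fin.snoc v x) μ = kappaFin κ v (μ + Measure.dirac x) * κ x μ := by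
  unfold kappaFin
  rw [List.ofFn_succ' (Fin.snoc v x)]
  simp only [Fin.snoc_castSucc, Fin.snoc_last, List.concat_eq_append]
  exact kappaList_concat κ _ x μ

lemma measurable_addMeasure :
    Measurable fun p : Measure X × Measure X => p.1 + p.2 := by
  apply Measure.measurable_of_measurable_coe
  intro s hs
  simp only [Measure.coe_add, Pi.add_apply]
  exact ((Measure.measurable_coe hs).comp measurable_fst).add
    ((Measure.measurable_coe hs).comp measurable_snd)

lemma measurable_restrictMeas {s : Set X} (hs : MeasurableSet s) :
    Measurable fun μ : Measure X => μ.restrict s := by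
  apply Measure.measurable_of_measurable_coe
  intro t ht
  simp_rw [Measure.restrict_apply ht]
  exact Measure.measurable_coe (ht.inter hs)

lemma measurable_diracSum_ofFn :
    ∀ m : ℕ, Measurable fun v : Fin m → X => diracSum (List.ofFn v)
  | 0 => by
      simp only [List.ofFn_zero, diracSum_nil]
      exact measurable_const
  | (m + 1) => by
      have h : (fun v : Fin (m + 1) → X => diracSum (List.ofFn v))
          = fun v => Measure.dirac (v 0) + diracSum (List.ofFn fun i : Fin m => v i.succ) := by
        funext v; rw [List.ofFn_succ, diracSum_cons]
      rw [h]
      exact measurable_addMeasure.comp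
        ((Measure.measurable_dirac.comp (measurable_pi_apply 0)).prodMk
          ((measurable_diracSum_ofFn m).comp
            (measurable_pi_lambda _ fun i => measurable_pi_apply i.succ)))

lemma measurable_kappaFin {κ : X → Measure X → ℝ≥0∞}
    (hκ : Measurable fun p : X × Measure X => κ p.1 p.2) :
    ∀ m : ℕ, Measurable fun p : (Fin m → X) × Measure X => kappaFin κ p.1 p.2
  | 0 => by
      have h : (fun p : (Fin 0 → X) × Measure X => kappaFin κ p.1 p.2) = fun _ => 1 := by
        funext p; simp [kappaFin, List.ofFn_zero, kappaList_nil]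
      rw [h]; exact measurable_const
  | (m + 1) => by
      have h : (fun p : (Fin (m + 1) → X) × Measure X => kappaFin κ p.1 p.2)
          = fun p => κ (p.1 0) (p.2 + diracSum (List.ofFn fun i : Fin m => p.1 i.succ)) *
              kappaFin κ (fun i : Fin m => p.1 i.succ) p.2 := by
        funext p
        simp only [kappaFin, List.ofFn_succ, kappaList_cons]
      rw [h]
      have htail : Measurable fun p : (Fin (m + 1) → X) × Measure X =>
          (fun i : Fin m => p.1 i.succ) :=
        measurable_pi_lambda _ fun i => (measurable_pi_apply i.succ).comp measurable_fst
      refine Measurable.mul ?_ ?_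
      · exact hκ.comp (((measurable_pi_apply 0).comp measurable_fst).prodMk
          (measurable_addMeasure.comp (measurable_snd.prodMk
            ((measurable_diracSum_ofFn m).comp htail))))
      · exact (measurable_kappaFin hκ m).comp (htail.prodMk measurable_snd)

noncomputable def Tm (κ : X → Measure X → ℝ≥0∞) (lam : Measure X) (B : Set X)
    (m : ℕ) (μ : Measure X) : ℝ≥0∞ :=
  ∫⁻ v : Fin m → X, kappaFin κ v μ ∂(Measure.pi fun _ : Fin m => lam.restrict B)

lemma Tm_zero (κ : X → Measure X → ℝ≥0∞) (lam : Measure X) (B : Set X) (μ : Measure X) :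
    Tm κ lam B 0 μ = 1 := by
  unfold Tm
  rw [Measure.pi_of_empty]
  have h : (fun v : Fin 0 → X => kappaFin κ v μ) = fun _ => 1 := by
    funext v; simp [kappaFin, List.ofFn_zero, kappaList_nil]
  rw [h, lintegral_const]
  simp

lemma measurable_Tm {κ : X → Measure X → ℝ≥0∞}
    (hκ : Measurable fun p : X × Measure X => κ p.1 p.2)
    (lam : Measure X) (B : Set X) [SigmaFinite (lam.restrict B)] (m : ℕ) :
    Measurable fun μ : Measure X => Tm κ lam B m μ := by
  unfold Tm
  exact Measurable.lintegral_prod_right'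
    (f := fun q : Measure X × (Fin m → X) => kappaFin κ q.2 q.1)
    ((measurable_kappaFin hκ m).comp (measurable_snd.prodMk measurable_fst))

lemma Tm_succ {κ : X → Measure X → ℝ≥0∞}
    (hκ : Measurable fun p : X × Measure X => κ p.1 p.2)
    (lam : Measure X) (B : Set X) [SigmaFinite (lam.restrict B)] (m : ℕ) (μ : Measure X) :
    Tm κ lam B (m + 1) μ
      = ∫⁻ x in B, Tm κ lam B m (μ + Measure.dirac x) * κ x μ ∂lam := by
  set e := MeasurableEquiv.piFinSuccAbove (fun _ : Fin (m + 1) => X) (Fin.last m) with he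
  have hmp := measurePreserving_piFinSuccAbove
    (fun _ : Fin (m + 1) => lam.restrict B) (Fin.last m)
  have hmps := MeasurePreserving.symm e hmp
  have hF : Measurable fun w : Fin (m + 1) → X => kappaFin κ w μ :=
    (measurable_kappaFin hκ (m + 1)).comp (measurable_id.prodMk measurable_const)
  have hsymm : ∀ (x : X) (v : Fin m → X), e.symm (x, v) = Fin.snoc v x := by
    intro x v
    rw [he, MeasurableEquiv.piFinSuccAbove_symm_apply]
    exact Fin.insertNth_last' x v
  have h1 : Tm κ lam B (m + 1) μ
      = ∫⁻ p : X × (Fin m → X), kappaFin κ (e.symm p) μ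
          ∂((lam.restrict B).prod (Measure.pi fun _ : Fin m => lam.restrict B)) := by
    unfold Tm
    rw [← hmps.lintegral_comp hF]
  have hG : Measurable fun p : X × (Fin m → X) => kappaFin κ (e.symm p) μ :=
    hF.comp e.symm.measurable
  rw [h1, lintegral_prod _ hG.aemeasurable]
  refine lintegral_congr fun x => ?_
  calc ∫⁻ v, kappaFin κ (e.symm (x, v)) μ ∂(Measure.pi fun _ : Fin m => lam.restrict B)
      = ∫⁻ v, kappaFin κ v (μ + Measure.dirac x) * κ x μ
          ∂(Measure.pi fun _ : Fin m => lam.restrict B) := by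
        refine lintegral_congr fun v => ?_
        rw [hsymm x v]
        exact kappaFin_snoc κ v x μ
    _ = Tm κ lam B m (μ + Measure.dirac x) * κ x μ := by
        exact lintegral_mul_const _ ((measurable_kappaFin hκ m).comp
          (measurable_id.prodMk measurable_const))

lemma partitionZ_eq_tsum (κ : X → Measure X → ℝ≥0∞) (lam : Measure X) (B : Set X)
    (ψ : Measure X) :
    partitionZ κ lam B ψ = ∑' m : ℕ, ((m.factorial : ℝ≥0∞))⁻¹ * Tm κ lam B m ψ := by
  rw [tsum_eq_zero_add' ENNReal.summable, Tm_zero]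
  simp only [Nat.factorial_zero, Nat.cast_one, inv_one, mul_one]
  rfl

lemma one_le_partitionZ (κ : X → Measure X → ℝ≥0∞) (lam : Measure X) (B : Set X)
    (ψ : Measure X) : 1 ≤ partitionZ κ lam B ψ := le_self_add

lemma measurable_partitionZ {κ : X → Measure X → ℝ≥0∞}
    (hκ : Measurable fun p : X × Measure X => κ p.1 p.2)
    (lam : Measure X) (B : Set X) [SigmaFinite (lam.restrict B)] :
    Measurable (partitionZ κ lam B) := by
  have h : partitionZ κ lam B = fun ψ => ∑' m : ℕ, ((m.factorial : ℝ≥0∞))⁻¹ * Tm κ lam B m ψ := by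
    funext ψ; exact partitionZ_eq_tsum κ lam B ψ
  rw [h]
  exact Measurable.ennreal_tsum fun m => (measurable_Tm hκ lam B m).const_mul _

lemma exists_nat_of_notIoo {x : ℝ≥0∞} (hx : x ≠ ⊤)
    (h : ∀ k : ℕ, x ∉ Set.Ioo (k : ℝ≥0∞) ((k : ℝ≥0∞) + 1)) : ∃ n : ℕ, x = n := by
  set n := ⌊x.toReal⌋₊ with hn
  have h0 : (0 : ℝ) ≤ x.toReal := ENNReal.toReal_nonneg
  have hle : (n : ℝ) ≤ x.toReal := Nat.floor_le h0
  have hlt : x.toReal < n + 1 := Nat.lt_floor_add_one _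
  rcases eq_or_lt_of_le hle with heq | hlt2
  · exact ⟨n, by rw [← ENNReal.ofReal_toReal hx, ← heq, ENNReal.ofReal_natCast]⟩
  · exfalso
    refine h n ⟨?_, ?_⟩
    · rw [← ENNReal.ofReal_toReal hx, ← ENNReal.ofReal_natCast n]
      exact (ENNReal.ofReal_lt_ofReal_iff ((Nat.cast_nonneg n).trans_lt hlt2)).mpr hlt2
    · rw [← ENNReal.ofReal_toReal hx]
      have h1 : ((n : ℝ≥0∞) + 1) = ENNReal.ofReal ((n : ℝ) + 1) := by
        rw [ENNReal.ofReal_add (Nat.cast_nonneg n) zero_le_one, ENNReal.ofReal_natCast,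
          ENNReal.ofReal_one]
      rw [h1]
      exact (ENNReal.ofReal_lt_ofReal_iff (by positivity)).mpr hlt
theorem partition_function_finite_and_void_probability
    {Ω : Type*} [MeasurableSpace Ω] (P : Measure Ω) [IsProbabilityMeasure P]
    (Bseq : ℕ → Set X) (hloc : IsLocalization Bseq)
    (lam : Measure X) (hlam : ∀ j, lam (Bseq j) ≠ ⊤)
    (κ : X → Measure X → ℝ≥0∞)
    (hκmeas : Measurable fun p : X × Measure X => κ p.1 p.2)
    (hκfin : ∀ (x : X) (μ : Measure X), κ x μ ≠ ⊤)
    (hcoc : Cocycle κ)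
    (η : Ω → Measure X) (hηmeas : Measurable η)
    (hcount : ∀ ω, IsCounting Bseq (η ω))
    (hGNZ : ∀ f : X → Measure X → ℝ≥0∞,
      Measurable (fun p : X × Measure X => f p.1 p.2) →
      ∫⁻ ω, ∫⁻ x, f x (η ω) ∂(η ω) ∂P
        = ∫⁻ ω, ∫⁻ x, f x (η ω + Measure.dirac x) * κ x (η ω) ∂lam ∂P)
    (B : Set X) (hB : MeasurableSet B) (hfinB : ∀ᵐ ω ∂P, η ω B < ⊤) :
    (∀ᵐ ω ∂P, partitionZ κ lam B ((η ω).restrict Bᶜ) < ⊤) ∧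
    (∀ᵐ ω ∂P,
      (P[Set.indicator {ω' : Ω | η ω' B = 0} (fun _ => (1 : ℝ)) |
          MeasurableSpace.comap (fun ω' => (η ω').restrict Bᶜ) inferInstance]) ω
        = ((partitionZ κ lam B ((η ω).restrict Bᶜ))⁻¹).toReal) := by
  classical
  obtain ⟨hBmono, hBseqMeas, hBunion⟩ := hloc
  haveI hσ : SigmaFinite lam :=
    ⟨⟨⟨fun n => Bseq n, fun _ => Set.mem_univ _, fun n => (hlam n).lt_top, hBunion⟩⟩⟩
  have hηB : Measurable fun ω => η ω B := (Measure.measurable_coe hB).comp hηmeas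
  have hprojmeas : Measurable fun ω => (η ω).restrict Bᶜ :=
    (measurable_restrictMeas hB.compl).comp hηmeas
  set proj : Ω → Measure X := fun ω => (η ω).restrict Bᶜ with hproj
  set Z : Measure X → ℝ≥0∞ := partitionZ κ lam B with hZ
  have hZmeas : Measurable Z := measurable_partitionZ hκmeas lam B
  have hZ1 : ∀ ψ, 1 ≤ Z ψ := one_le_partitionZ κ lam B
  -- dirac measure added inside B
  have haddB : ∀ (μ : Measure X) (x : X), x ∈ B → (μ + Measure.dirac x) B = μ B + 1 := by
    intro μ x hx
    simp [Measure.add_apply, Measure.dirac_apply' _ hB, Set.indicator_of_mem hx]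
  have haddC : ∀ (μ : Measure X) (x : X), x ∈ B →
      (μ + Measure.dirac x).restrict Bᶜ = μ.restrict Bᶜ := by
    intro μ x hx
    rw [Measure.restrict_add, MeasureTheory.restrict_dirac' hB.compl]
    simp [hx]
  -- GNZ specialisation
  have gnzB : ∀ φ : Measure X → ℝ≥0∞, Measurable φ →
      ∫⁻ ω, η ω B * φ (η ω) ∂P
        = ∫⁻ ω, ∫⁻ x in B, φ (η ω + Measure.dirac x) * κ x (η ω) ∂lam ∂P := by
    intro φ hφ
    have hf : Measurable fun p : X × Measure X =>
        B.indicator (fun _ => (1 : ℝ≥0∞)) p.1 * φ p.2 :=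
      ((measurable_one.indicator hB).comp measurable_fst).mul (hφ.comp measurable_snd)
    have key := hGNZ (fun x μ => B.indicator (fun _ => (1 : ℝ≥0∞)) x * φ μ) hf
    have hL : ∀ ω, (∫⁻ x, B.indicator (fun _ => (1 : ℝ≥0∞)) x * φ (η ω) ∂(η ω))
        = η ω B * φ (η ω) := by
      intro ω
      have h1 : ∀ x, B.indicator (fun _ => (1 : ℝ≥0∞)) x * φ (η ω)
          = B.indicator (fun _ => φ (η ω)) x := by
        intro x; by_cases hx : x ∈ B <;> simp [hx]
      simp_rw [h1]
      rw [lintegral_indicator hB, setLIntegral_const, mul_comm]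
    have hR : ∀ ω, (∫⁻ x, B.indicator (fun _ => (1 : ℝ≥0∞)) x * φ (η ω + Measure.dirac x)
          * κ x (η ω) ∂lam)
        = ∫⁻ x in B, φ (η ω + Measure.dirac x) * κ x (η ω) ∂lam := by
      intro ω
      have h1 : ∀ x, B.indicator (fun _ => (1 : ℝ≥0∞)) x * φ (η ω + Measure.dirac x) * κ x (η ω)
          = B.indicator (fun x => φ (η ω + Measure.dirac x) * κ x (η ω)) x := by
        intro x; by_cases hx : x ∈ B <;> simp [hx]
      simp_rw [h1]
      rw [lintegral_indicator hB]
    calc ∫⁻ ω, η ω B * φ (η ω) ∂P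
        = ∫⁻ ω, ∫⁻ x, B.indicator (fun _ => (1 : ℝ≥0∞)) x * φ (η ω) ∂(η ω) ∂P :=
          (lintegral_congr fun ω => hL ω).symm
      _ = ∫⁻ ω, ∫⁻ x, B.indicator (fun _ => (1 : ℝ≥0∞)) x * φ (η ω + Measure.dirac x)
            * κ x (η ω) ∂lam ∂P := key
      _ = ∫⁻ ω, ∫⁻ x in B, φ (η ω + Measure.dirac x) * κ x (η ω) ∂lam ∂P :=
          lintegral_congr fun ω => hR ω
  -- integrality
  have hIoo : ∀ k : ℕ, P {ω | η ω B ∈ Set.Ioo (k : ℝ≥0∞) ((k : ℝ≥0∞) + 1)} = 0 := by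
    have hsetm : ∀ k : ℕ, MeasurableSet {μ : Measure X | μ B ∈ Set.Ioo (k : ℝ≥0∞) ((k : ℝ≥0∞) + 1)} :=
      fun k => (Measure.measurable_coe hB) measurableSet_Ioo
    have hφm : ∀ k : ℕ, Measurable
        (Set.indicator {μ : Measure X | μ B ∈ Set.Ioo (k : ℝ≥0∞) ((k : ℝ≥0∞) + 1)}
          (fun _ => (1 : ℝ≥0∞))) := fun k => measurable_const.indicator (hsetm k)
    -- from vanishing right-hand side we get the conclusion
    have key0 : ∀ k : ℕ,
        (∫⁻ ω, ∫⁻ x in B,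
            Set.indicator {μ : Measure X | μ B ∈ Set.Ioo (k : ℝ≥0∞) ((k : ℝ≥0∞) + 1)}
              (fun _ => (1 : ℝ≥0∞)) (η ω + Measure.dirac x) * κ x (η ω) ∂lam ∂P) = 0 →
        P {ω | η ω B ∈ Set.Ioo (k : ℝ≥0∞) ((k : ℝ≥0∞) + 1)} = 0 := by
      intro k hz
      have hkey := gnzB _ (hφm k)
      rw [hz] at hkey
      have hae := (lintegral_eq_zero_iff (hηB.mul ((hφm k).comp hηmeas))).mp hkey
      have hae' : ∀ᵐ ω ∂P, η ω B *
          Set.indicator {μ : Measure X | μ B ∈ Set.Ioo (k : ℝ≥0∞) ((k : ℝ≥0∞) + 1)}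
            (fun _ => (1 : ℝ≥0∞)) (η ω) = 0 := by
        filter_upwards [hae] with ω h using h
      rw [ae_iff] at hae'
      refine measure_mono_null ?_ hae'
      intro ω hω
      simp only [Set.mem_setOf_eq] at hω ⊢
      rw [Set.indicator_of_mem
        (show η ω ∈ {μ : Measure X | μ B ∈ Set.Ioo (k : ℝ≥0∞) ((k : ℝ≥0∞) + 1)} from hω),
        mul_one]
      exact ((zero_le : (0 : ℝ≥0∞) ≤ k).trans_lt hω.1).ne'
    intro k
    induction k with
    | zero =>
        refine key0 0 ?_
        have hz : ∀ ω, (∫⁻ x in B,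
            Set.indicator {μ : Measure X | μ B ∈ Set.Ioo ((0 : ℕ) : ℝ≥0∞) (((0 : ℕ) : ℝ≥0∞) + 1)}
              (fun _ => (1 : ℝ≥0∞)) (η ω + Measure.dirac x) * κ x (η ω) ∂lam) = 0 := by
          intro ω
          rw [← lintegral_zero (μ := lam.restrict B)]
          refine setLIntegral_congr_fun hB (fun x hx => ?_)
          have hmem : (η ω + Measure.dirac x) ∉
              {μ : Measure X | μ B ∈ Set.Ioo ((0 : ℕ) : ℝ≥0∞) (((0 : ℕ) : ℝ≥0∞) + 1)} := by
            intro hc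
            have h2 := hc.2
            rw [haddB (η ω) x hx] at h2
            simp only [Nat.cast_zero, zero_add] at h2
            exact absurd h2 (not_lt.mpr le_add_self)
          rw [Set.indicator_of_notMem hmem, zero_mul]
        rw [← lintegral_zero (μ := P)]
        exact lintegral_congr fun ω => hz ω
    | succ k ih =>
        refine key0 (k + 1) ?_
        have hz : ∀ᵐ ω ∂P, (∫⁻ x in B,
            Set.indicator {μ : Measure X | μ B ∈
                Set.Ioo (((k + 1 : ℕ)) : ℝ≥0∞) ((((k + 1 : ℕ)) : ℝ≥0∞) + 1)}
              (fun _ => (1 : ℝ≥0∞)) (η ω + Measure.dirac x) * κ x (η ω) ∂lam) = 0 := by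
          filter_upwards [measure_eq_zero_iff_ae_notMem.mp ih] with ω hω
          rw [← lintegral_zero (μ := lam.restrict B)]
          refine setLIntegral_congr_fun hB (fun x hx => ?_)
          have hmem : (η ω + Measure.dirac x) ∉
              {μ : Measure X | μ B ∈
                Set.Ioo (((k + 1 : ℕ)) : ℝ≥0∞) ((((k + 1 : ℕ)) : ℝ≥0∞) + 1)} := by
            intro hc
            obtain ⟨hc1, hc2⟩ := hc
            rw [haddB (η ω) x hx] at hc1 hc2
            refine hω ⟨?_, ?_⟩
            · have : ((k : ℝ≥0∞) + 1) < η ω B + 1 := by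
                rwa [Nat.cast_add, Nat.cast_one] at hc1
              exact (ENNReal.add_lt_add_iff_right ENNReal.one_ne_top).mp this
            · have : η ω B + 1 < ((k : ℝ≥0∞) + 1) + 1 := by
                rwa [Nat.cast_add, Nat.cast_one] at hc2
              exact (ENNReal.add_lt_add_iff_right ENNReal.one_ne_top).mp this
          rw [Set.indicator_of_notMem hmem, zero_mul]
        calc (∫⁻ ω, ∫⁻ x in B,
            Set.indicator {μ : Measure X | μ B ∈
                Set.Ioo (((k + 1 : ℕ)) : ℝ≥0∞) ((((k + 1 : ℕ)) : ℝ≥0∞) + 1)}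
              (fun _ => (1 : ℝ≥0∞)) (η ω + Measure.dirac x) * κ x (η ω) ∂lam ∂P)
            = ∫⁻ _, (0 : ℝ≥0∞) ∂P := lintegral_congr_ae hz
          _ = 0 := lintegral_zero
  have hNat : ∀ᵐ ω ∂P, ∃ n : ℕ, η ω B = (n : ℝ≥0∞) := by
    have h1 : ∀ᵐ ω ∂P, ∀ k : ℕ, η ω B ∉ Set.Ioo (k : ℝ≥0∞) ((k : ℝ≥0∞) + 1) := by
      rw [ae_all_iff]
      intro k
      exact measure_eq_zero_iff_ae_notMem.mp (hIoo k)
    filter_upwards [h1, hfinB] with ω hk hfin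
    exact exists_nat_of_notIoo hfin.ne hk
  -- indicator notation
  set ind : ℕ → Measure X → ℝ≥0∞ :=
    fun m μ => Set.indicator {μ' : Measure X | μ' B = (m : ℝ≥0∞)} (fun _ => 1) μ with hind
  have hind_meas : ∀ m : ℕ, Measurable (ind m) :=
    fun m => measurable_const.indicator ((Measure.measurable_coe hB) (measurableSet_singleton _))
  have hind_mem : ∀ (m : ℕ) (μ : Measure X), μ B = (m : ℝ≥0∞) → ind m μ = 1 :=
    fun m μ h =>
      Set.indicator_of_mem (show μ ∈ {μ' : Measure X | μ' B = (m : ℝ≥0∞)} from h) _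
  have hind_nmem : ∀ (m : ℕ) (μ : Measure X), μ B ≠ (m : ℝ≥0∞) → ind m μ = 0 :=
    fun m μ h =>
      Set.indicator_of_notMem (show μ ∉ {μ' : Measure X | μ' B = (m : ℝ≥0∞)} from h) _
  -- one-step reduction
  have step : ∀ (m k : ℕ) (g : Measure X → ℝ≥0∞), Measurable g →
      ((k : ℝ≥0∞) + 1) * ∫⁻ ω, ind (k + 1) (η ω) * g (proj ω) * Tm κ lam B m (η ω) ∂P
        = ∫⁻ ω, ind k (η ω) * g (proj ω) * Tm κ lam B (m + 1) (η ω) ∂P := by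
    intro m k g hg
    have hgc : Measurable fun μ : Measure X => g (μ.restrict Bᶜ) :=
      hg.comp (measurable_restrictMeas hB.compl)
    set φ : Measure X → ℝ≥0∞ :=
      fun μ => ind (k + 1) μ * g (μ.restrict Bᶜ) * Tm κ lam B m μ with hφdef
    have hφ : Measurable φ :=
      ((hind_meas (k + 1)).mul hgc).mul (measurable_Tm hκmeas lam B m)
    have hkey := gnzB φ hφ
    -- left side
    have hLeq : ∫⁻ ω, η ω B * φ (η ω) ∂P
        = ((k : ℝ≥0∞) + 1) * ∫⁻ ω, ind (k + 1) (η ω) * g (proj ω) * Tm κ lam B m (η ω) ∂P := by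
      have hmeasLHS : Measurable fun ω => ind (k + 1) (η ω) * g (proj ω) * Tm κ lam B m (η ω) := by
        exact (((hind_meas (k + 1)).comp hηmeas).mul (hgc.comp hηmeas)).mul
          ((measurable_Tm hκmeas lam B m).comp hηmeas)
      rw [← lintegral_const_mul _ hmeasLHS]
      refine lintegral_congr fun ω => ?_
      by_cases hc : η ω B = ((k + 1 : ℕ) : ℝ≥0∞)
      · rw [hφdef]
        simp only [hproj]
        rw [hc]
        push_cast
        ring
      · rw [hφdef]
        simp only [hproj]
        rw [hind_nmem _ _ hc]
        simp
    -- right side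
    have hReq : ∀ ω, (∫⁻ x in B, φ (η ω + Measure.dirac x) * κ x (η ω) ∂lam)
        = ind k (η ω) * g (proj ω) * Tm κ lam B (m + 1) (η ω) := by
      intro ω
      have h1 : ∀ x ∈ B, φ (η ω + Measure.dirac x) * κ x (η ω)
          = (ind k (η ω) * g (proj ω)) * (Tm κ lam B m (η ω + Measure.dirac x) * κ x (η ω)) := by
        intro x hx
        have hi : ind (k + 1) (η ω + Measure.dirac x) = ind k (η ω) := by
          by_cases hc : η ω B = (k : ℝ≥0∞)
          · rw [hind_mem _ _ hc]
            refine hind_mem _ _ ?_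
            rw [haddB (η ω) x hx, hc]
            push_cast
            ring
          · rw [hind_nmem _ _ hc]
            refine hind_nmem _ _ ?_
            rw [haddB (η ω) x hx]
            intro hcon
            refine hc ?_
            have : η ω B + 1 = (k : ℝ≥0∞) + 1 := by
              rw [hcon]; push_cast; ring
            exact (ENNReal.add_left_inj ENNReal.one_ne_top).mp this
        rw [hφdef]
        simp only [hproj]
        rw [haddC (η ω) x hx, hi]
        ring
      rw [setLIntegral_congr_fun hB (fun x hx => h1 x hx)]
      have hmx : Measurable fun x : X => Tm κ lam B m (η ω + Measure.dirac x) * κ x (η ω) := by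
        refine Measurable.mul ?_ ?_
        · exact (measurable_Tm hκmeas lam B m).comp
            (measurable_addMeasure.comp (measurable_const.prodMk Measure.measurable_dirac))
        · exact hκmeas.comp (measurable_id.prodMk measurable_const)
      rw [lintegral_const_mul _ hmx, ← Tm_succ hκmeas lam B m (η ω)]
    rw [hLeq] at hkey
    rw [hkey]
    exact lintegral_congr fun ω => hReq ω
  -- iterated reduction
  have chain : ∀ (m k : ℕ) (g : Measure X → ℝ≥0∞), Measurable g →
      ∫⁻ ω, ind k (η ω) * g (proj ω) * Tm κ lam B m (η ω) ∂P
        = ((∏ j ∈ Finset.range m, (k + j + 1) : ℕ) : ℝ≥0∞) *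
            ∫⁻ ω, ind (k + m) (η ω) * g (proj ω) ∂P := by
    intro m
    induction m with
    | zero =>
        intro k g hg
        simp only [Tm_zero, mul_one, Finset.range_zero, Finset.prod_empty, Nat.cast_one,
          one_mul, Nat.add_zero]
    | succ m ih =>
        intro k g hg
        rw [← step m k g hg, ih (k + 1) g hg]
        have h1 : k + 1 + m = k + (m + 1) := by omega
        rw [h1]
        have h2 : (∏ j ∈ Finset.range (m + 1), (k + j + 1))
            = (k + 1) * ∏ j ∈ Finset.range m, (k + 1 + j + 1) := by
          rw [Finset.prod_range_succ']
          rw [mul_comm]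
          congr 1
          exact Finset.prod_congr rfl fun j _ => by omega
        rw [h2]
        push_cast
        ring
  -- master identity
  have master : ∀ g : Measure X → ℝ≥0∞, Measurable g →
      ∫⁻ ω, g (proj ω) ∂P = ∫⁻ ω, ind 0 (η ω) * g (proj ω) * Z (proj ω) ∂P := by
    intro g hg
    have hgc : Measurable fun ω => g (proj ω) := hg.comp hprojmeas
    have htermmeas : ∀ m : ℕ, Measurable fun ω => ind m (η ω) * g (proj ω) :=
      fun m => ((hind_meas m).comp hηmeas).mul hgc
    have hdec : ∫⁻ ω, g (proj ω) ∂P = ∑' m : ℕ, ∫⁻ ω, ind m (η ω) * g (proj ω) ∂P := by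
      rw [← lintegral_tsum fun m => (htermmeas m).aemeasurable]
      refine lintegral_congr_ae ?_
      filter_upwards [hNat] with ω hn
      obtain ⟨n, hn⟩ := hn
      have hvan : ∀ m : ℕ, m ≠ n → ind m (η ω) * g (proj ω) = 0 := by
        intro m hm
        rw [hind_nmem m _ (fun hc => hm (Nat.cast_inj.mp (hn ▸ hc : (n : ℝ≥0∞) = m)).symm)]
        rw [zero_mul]
      rw [tsum_eq_single n hvan, hind_mem n _ hn, one_mul]
    have hterm : ∀ m : ℕ, ∫⁻ ω, ind m (η ω) * g (proj ω) ∂P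
        = ((m.factorial : ℝ≥0∞))⁻¹ *
            ∫⁻ ω, ind 0 (η ω) * g (proj ω) * Tm κ lam B m (η ω) ∂P := by
      intro m
      have hc := chain m 0 g hg
      have hp : (∏ j ∈ Finset.range m, (0 + j + 1)) = m.factorial := by
        rw [← Finset.prod_range_add_one_eq_factorial]
        exact Finset.prod_congr rfl fun j _ => by omega
      rw [hp] at hc
      have hz0 : 0 + m = m := by omega
      rw [hz0] at hc
      rw [hc, ← mul_assoc, ENNReal.inv_mul_cancel, one_mul]
      · exact_mod_cast (Nat.factorial_pos m).ne'
      · exact ENNReal.natCast_ne_top _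
    have hmm : ∀ m : ℕ, Measurable fun ω => ind 0 (η ω) * g (proj ω) * Tm κ lam B m (η ω) :=
      fun m => (htermmeas 0).mul ((measurable_Tm hκmeas lam B m).comp hηmeas)
    have hmeasT : ∀ m : ℕ, Measurable fun ω =>
        ((m.factorial : ℝ≥0∞))⁻¹ * (ind 0 (η ω) * g (proj ω) * Tm κ lam B m (η ω)) :=
      fun m => (hmm m).const_mul _
    rw [hdec]
    calc ∑' m : ℕ, ∫⁻ ω, ind m (η ω) * g (proj ω) ∂P
        = ∑' m : ℕ, ∫⁻ ω, ((m.factorial : ℝ≥0∞))⁻¹ *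
            (ind 0 (η ω) * g (proj ω) * Tm κ lam B m (η ω)) ∂P := by
          refine tsum_congr fun m => ?_
          rw [hterm m, ← lintegral_const_mul _ (hmm m)]
      _ = ∫⁻ ω, ∑' m : ℕ, ((m.factorial : ℝ≥0∞))⁻¹ *
            (ind 0 (η ω) * g (proj ω) * Tm κ lam B m (η ω)) ∂P :=
          (lintegral_tsum fun m => (hmeasT m).aemeasurable).symm
      _ = ∫⁻ ω, ind 0 (η ω) * g (proj ω) * Z (proj ω) ∂P := by
          refine lintegral_congr fun ω => ?_
          by_cases h0 : η ω B = ((0 : ℕ) : ℝ≥0∞)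
          · have heq : proj ω = η ω := by
              have h1 : (η ω).restrict B = 0 := by
                rw [Measure.restrict_eq_zero]
                exact_mod_cast h0
              have h2 := Measure.restrict_add_restrict_compl (μ := η ω) hB
              show (η ω).restrict Bᶜ = η ω
              conv_rhs => rw [← h2]
              rw [h1, zero_add]
            rw [heq, hZ, partitionZ_eq_tsum, ← ENNReal.tsum_mul_left]
            refine tsum_congr fun m => by ring
          · rw [hind_nmem 0 _ h0]
            simp
  -- conclusion 1
  have hSinf : MeasurableSet {ψ : Measure X | Z ψ = ⊤} := hZmeas (measurableSet_singleton ⊤)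
  have hZfin : ∀ᵐ ω ∂P, Z (proj ω) < ⊤ := by
    have h1 := master (Set.indicator {ψ : Measure X | Z ψ = ⊤} (fun _ => 1))
      (measurable_const.indicator hSinf)
    have hmeaspre : MeasurableSet (proj ⁻¹' {ψ : Measure X | Z ψ = ⊤}) := hprojmeas hSinf
    have hL : ∫⁻ ω, Set.indicator {ψ : Measure X | Z ψ = ⊤} (fun _ => (1 : ℝ≥0∞)) (proj ω) ∂P
        = P (proj ⁻¹' {ψ : Measure X | Z ψ = ⊤}) := by
      have hfun : (fun ω => Set.indicator {ψ : Measure X | Z ψ = ⊤} (fun _ => (1 : ℝ≥0∞)) (proj ω))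
          = Set.indicator (proj ⁻¹' {ψ : Measure X | Z ψ = ⊤}) (fun _ => (1 : ℝ≥0∞)) := by
        funext ω
        by_cases hω : proj ω ∈ {ψ : Measure X | Z ψ = ⊤}
        · rw [Set.indicator_of_mem hω, Set.indicator_of_mem (show ω ∈ _ from hω)]
        · rw [Set.indicator_of_notMem hω, Set.indicator_of_notMem (show ω ∉ _ from hω)]
      rw [hfun, lintegral_indicator hmeaspre, setLIntegral_one]
    set E := proj ⁻¹' {ψ : Measure X | Z ψ = ⊤} ∩ {ω | η ω B = ((0 : ℕ) : ℝ≥0∞)} with hE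
    have hEmeas : MeasurableSet E :=
      hmeaspre.inter (hηB (measurableSet_singleton _))
    have hR : ∫⁻ ω, ind 0 (η ω) *
          Set.indicator {ψ : Measure X | Z ψ = ⊤} (fun _ => (1 : ℝ≥0∞)) (proj ω) * Z (proj ω) ∂P
        = ⊤ * P E := by
      have hfun : (fun ω => ind 0 (η ω) *
            Set.indicator {ψ : Measure X | Z ψ = ⊤} (fun _ => (1 : ℝ≥0∞)) (proj ω) * Z (proj ω))
          = Set.indicator E (fun _ => (⊤ : ℝ≥0∞)) := by
        funext ω
        by_cases h1 : η ω B = ((0 : ℕ) : ℝ≥0∞) <;> by_cases h2 : Z (proj ω) = ⊤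
        · rw [hind_mem 0 _ h1, Set.indicator_of_mem (show proj ω ∈ _ from h2),
            Set.indicator_of_mem (show ω ∈ E from ⟨h2, h1⟩), h2]
          ring
        · rw [Set.indicator_of_notMem (show proj ω ∉ _ from h2),
            Set.indicator_of_notMem (show ω ∉ E from fun hc => h2 hc.1)]
          ring
        · rw [hind_nmem 0 _ h1,
            Set.indicator_of_notMem (show ω ∉ E from fun hc => h1 hc.2)]
          ring
        · rw [hind_nmem 0 _ h1,
            Set.indicator_of_notMem (show ω ∉ E from fun hc => h1 hc.2)]
          ring
      rw [hfun, lintegral_indicator hEmeas, setLIntegral_const]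
    rw [hL, hR] at h1
    have hPE : P E = 0 := by
      by_contra hne
      rw [ENNReal.top_mul hne] at h1
      exact (measure_lt_top P _).ne h1
    rw [hPE, mul_zero] at h1
    have hset : {ω | ¬ Z (proj ω) < ⊤} = proj ⁻¹' {ψ : Measure X | Z ψ = ⊤} := by
      ext ω
      simp [lt_top_iff_ne_top]
    rw [ae_iff, hset]
    exact h1
  refine ⟨hZfin, ?_⟩
  -- conclusion 2
  have hm : MeasurableSpace.comap proj inferInstance ≤ (inferInstance : MeasurableSpace Ω) :=
    hprojmeas.comap_le
  set f : Ω → ℝ := Set.indicator {ω' : Ω | η ω' B = 0} (fun _ => (1 : ℝ)) with hf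
  set h : Ω → ℝ := fun ω => ((Z (proj ω))⁻¹).toReal with hh
  have hφmeas : Measurable fun ψ : Measure X => ((Z ψ)⁻¹).toReal :=
    (hZmeas.inv).ennreal_toReal
  have hprojm' : @Measurable Ω (Measure X) (MeasurableSpace.comap proj inferInstance) _ proj :=
    Measurable.of_comap_le le_rfl
  have hhm : @Measurable Ω ℝ (MeasurableSpace.comap proj inferInstance) _ h :=
    hφmeas.comp hprojm'
  have hsetf : MeasurableSet {ω' : Ω | η ω' B = 0} := hηB (measurableSet_singleton 0)
  have hfint : Integrable f P := by
    rw [hf]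
    refine (integrable_indicator_iff hsetf).mpr ?_
    exact (integrableOn_const_iff).mpr (Or.inr (measure_lt_top P _))
  have hinv_le : ∀ ψ, (Z ψ)⁻¹ ≤ 1 := fun ψ => ENNReal.inv_le_one.mpr (hZ1 ψ)
  have hhb : ∀ ω, ‖h ω‖ ≤ 1 := by
    intro ω
    rw [hh, Real.norm_eq_abs, abs_of_nonneg ENNReal.toReal_nonneg]
    calc ((Z (proj ω))⁻¹).toReal ≤ (1 : ℝ≥0∞).toReal :=
          ENNReal.toReal_mono ENNReal.one_ne_top (hinv_le _)
      _ = 1 := by simp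
  have hhint : Integrable h P := by
    have hsm : AEStronglyMeasurable h P := (hφmeas.comp hprojmeas).aestronglyMeasurable
    exact (integrable_const (1 : ℝ)).mono' hsm (ae_of_all _ hhb)
  have hsetint : ∀ s : Set Ω, MeasurableSet[MeasurableSpace.comap proj inferInstance] s →
      P s < ⊤ → ∫ ω in s, h ω ∂P = ∫ ω in s, f ω ∂P := by
    intro s hs _
    obtain ⟨S, hS, rfl⟩ := MeasurableSpace.measurableSet_comap.mp hs
    have hpre : MeasurableSet (proj ⁻¹' S) := hprojmeas hS
    have e1 : ∫ ω in proj ⁻¹' S, h ω ∂P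
        = (∫⁻ ω in proj ⁻¹' S, (Z (proj ω))⁻¹ ∂P).toReal := by
      rw [hh]
      rw [integral_toReal]
      · exact ((hZmeas.inv.comp hprojmeas).aemeasurable).restrict
      · exact ae_of_all _ fun ω => (hinv_le _).trans_lt ENNReal.one_lt_top
    have e2 : ∫ ω in proj ⁻¹' S, f ω ∂P
        = (∫⁻ ω in proj ⁻¹' S,
            Set.indicator {ω' : Ω | η ω' B = 0} (fun _ => (1 : ℝ≥0∞)) ω ∂P).toReal := by
      rw [hf]
      have hptw : ∀ ω, Set.indicator {ω' : Ω | η ω' B = 0} (fun _ => (1 : ℝ)) ω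
          = (Set.indicator {ω' : Ω | η ω' B = 0} (fun _ => (1 : ℝ≥0∞)) ω).toReal := by
        intro ω
        by_cases h0 : ω ∈ {ω' : Ω | η ω' B = 0} <;> simp [h0]
      simp_rw [hptw]
      rw [integral_toReal]
      · exact ((measurable_const.indicator hsetf).aemeasurable).restrict
      · refine ae_of_all _ fun ω => ?_
        by_cases h0 : ω ∈ {ω' : Ω | η ω' B = 0} <;> simp [h0]
    have hgS : Measurable fun ψ : Measure X =>
        Set.indicator S (fun _ => (1 : ℝ≥0∞)) ψ * (Z ψ)⁻¹ :=
      (measurable_const.indicator hS).mul hZmeas.inv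
    have hmas := master _ hgS
    have hRae : ∫⁻ ω, ind 0 (η ω) *
          (Set.indicator S (fun _ => (1 : ℝ≥0∞)) (proj ω) * (Z (proj ω))⁻¹) * Z (proj ω) ∂P
        = ∫⁻ ω, Set.indicator S (fun _ => (1 : ℝ≥0∞)) (proj ω) * ind 0 (η ω) ∂P := by
      refine lintegral_congr_ae ?_
      filter_upwards [hZfin] with ω hfin
      have hZne : Z (proj ω) ≠ 0 := fun hc => by simpa [hc] using hZ1 (proj ω)
      have hcancel : (Z (proj ω))⁻¹ * Z (proj ω) = 1 :=
        ENNReal.inv_mul_cancel hZne hfin.ne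
      calc ind 0 (η ω) *
            (Set.indicator S (fun _ => (1 : ℝ≥0∞)) (proj ω) * (Z (proj ω))⁻¹) * Z (proj ω)
          = Set.indicator S (fun _ => (1 : ℝ≥0∞)) (proj ω) * ind 0 (η ω) *
              ((Z (proj ω))⁻¹ * Z (proj ω)) := by ring
        _ = Set.indicator S (fun _ => (1 : ℝ≥0∞)) (proj ω) * ind 0 (η ω) := by
            rw [hcancel, mul_one]
    have i1 : ∫⁻ ω in proj ⁻¹' S, (Z (proj ω))⁻¹ ∂P
        = ∫⁻ ω, Set.indicator S (fun _ => (1 : ℝ≥0∞)) (proj ω) * (Z (proj ω))⁻¹ ∂P := by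
      rw [← lintegral_indicator hpre]
      refine lintegral_congr fun ω => ?_
      by_cases h0 : proj ω ∈ S <;>
        simp [Set.indicator_apply, h0]
    have i2 : ∫⁻ ω in proj ⁻¹' S,
          Set.indicator {ω' : Ω | η ω' B = 0} (fun _ => (1 : ℝ≥0∞)) ω ∂P
        = ∫⁻ ω, Set.indicator S (fun _ => (1 : ℝ≥0∞)) (proj ω) * ind 0 (η ω) ∂P := by
      rw [← lintegral_indicator hpre]
      refine lintegral_congr fun ω => ?_
      by_cases hp : proj ω ∈ S <;> by_cases hq : η ω B = 0 <;>
        simp [Set.indicator_apply, hind, hp, hq]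
    have e3 : ∫⁻ ω in proj ⁻¹' S, (Z (proj ω))⁻¹ ∂P
        = ∫⁻ ω in proj ⁻¹' S,
            Set.indicator {ω' : Ω | η ω' B = 0} (fun _ => (1 : ℝ≥0∞)) ω ∂P :=
      i1.trans (hmas.trans (hRae.trans i2.symm))
    rw [e1, e2, e3]
  have hsm' : StronglyMeasurable[MeasurableSpace.comap proj inferInstance] h :=
    hhm.stronglyMeasurable
  have hcond := ae_eq_condExp_of_forall_setIntegral_eq hm hfint
    (fun s _ _ => hhint.integrableOn) hsetint hsm'.aestronglyMeasurable
  filter_upwards [hcond] with ω hω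
  exact hω.symm

end Gibbs
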